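/- Let n ≥ 1 and let a₁,…,aₙ : ℝ → ℝ be functions of class C^{2n} such that for every t ∈ ℝ the monic polynomial P(t)(x) = xⁿ - a₁(t)xⁿ⁻¹ + ⋯ + (-1)ⁿaₙ(t) has all roots real. Fix t₀ ∈ ℝ, and suppose x : ℝ → ℝⁿ is a parametrization of the roots of P, differentiable on a neighborhood of t₀, whose derivative x' is continuous at t₀ and which has the property that for every differentiable root y (i.e. y differentiable with P(t)(y(t)) = 0 near t₀ and y(t₀) = x_j(t₀) for some j), the value y'(t₀) belongs to {x_i'(t₀) : x_i(t₀) = y(t₀)}. Then every parametrization y = (y₁,…,yₙ) : ℝ → ℝⁿ of the roots of P which is differentiable near t₀ has derivative y' continuous at t₀. -/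

import Mathlib

open Polynomial Filter Topology

lemma aux_seq_vanish_deriv {g : ℝ → ℝ} {t : ℝ} (hg : DifferentiableAt ℝ g t)
    {s : ℕ → ℝ} (hs : Tendsto s atTop (𝓝[≠] t))
    (h0 : ∀ m, g (s m) = 0) : g t = 0 ∧ deriv g t = 0 := by
  have hst : Tendsto s atTop (𝓝 t) := hs.mono_right nhdsWithin_le_nhds
  have hgt : g t = 0 := by
    have h1 : Tendsto (fun m => g (s m)) atTop (𝓝 (g t)) := hg.continuousAt.tendsto.comp hst
    have h2 : Tendsto (fun m => g (s m)) atTop (𝓝 (0:ℝ)) := by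
      simp [h0]
    exact tendsto_nhds_unique h1 h2
  refine ⟨hgt, ?_⟩
  have hd := hg.hasDerivAt
  rw [hasDerivAt_iff_tendsto_slope] at hd
  have h2 : Tendsto (fun m => slope g t (s m)) atTop (𝓝 (deriv g t)) := hd.comp hs
  have h3 : ∀ m, slope g t (s m) = 0 := fun m => by
    simp [slope_def_field, h0 m, hgt]
  have h4 : Tendsto (fun m => slope g t (s m)) atTop (𝓝 (0:ℝ)) := by
    simp [h3]
  exact tendsto_nhds_unique h2 h4

lemma aux_pigeon {ι : Type*} [Finite ι] {p : ι → ℕ → Prop}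
    (h : ∀ᶠ m in atTop, ∃ j, p j m) : ∃ j, ∃ᶠ m in atTop, p j m := by
  by_contra hc
  push_neg at hc
  have hall : ∀ᶠ m in atTop, ∀ j, ¬ p j m := Filter.eventually_all.2 hc
  obtain ⟨m, ⟨j, hj⟩, hm2⟩ := (h.and hall).exists
  exact hm2 j hj

/-- The monic polynomial curve `P(t)(x) = xⁿ - a₁(t)xⁿ⁻¹ + a₂(t)xⁿ⁻² - ⋯ + (-1)ⁿ aₙ(t)`. -/
noncomputable def curvePoly (n : ℕ) (a : ℕ → ℝ → ℝ) (t : ℝ) : Polynomial ℝ :=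
  X ^ n + ∑ k ∈ Finset.Icc 1 n, C ((-1 : ℝ) ^ k * a k t) * X ^ (n - k)

/-- `x : T → ℝⁿ` parametrizes the roots of `P` on `T`: for each `t ∈ T` the multiset
`{x₁(t),…,xₙ(t)}` equals the multiset of roots of `P(t)` with multiplicity. -/
def IsRootParamOn (n : ℕ) (a : ℕ → ℝ → ℝ) (T : Set ℝ) (x : Fin n → ℝ → ℝ) : Prop :=
  ∀ t ∈ T, (curvePoly n a t).roots = Multiset.map (fun i => x i t) (Finset.univ : Finset (Fin n)).val

theorem deriv_continuousAt_of_any_differentiable_parametrization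
    (n : ℕ) (hn : 1 ≤ n) (a : ℕ → ℝ → ℝ)
    (hsmooth : ∀ k ∈ Finset.Icc 1 n, ContDiff ℝ (2 * n : ℕ) (a k))
    (hreal : ∀ t : ℝ, ((curvePoly n a t).roots).card = n)
    (t₀ : ℝ) (x : Fin n → ℝ → ℝ)
    (hx : IsRootParamOn n a Set.univ x)
    (hxdiff : ∃ V : Set ℝ, IsOpen V ∧ t₀ ∈ V ∧ ∀ i, ∀ t ∈ V, DifferentiableAt ℝ (x i) t)
    (hxC1 : ∀ i, ContinuousAt (deriv (x i)) t₀)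
    (hxuniv : ∀ y : ℝ → ℝ,
      (∀ᶠ t in nhds t₀, DifferentiableAt ℝ y t) →
      (∀ᶠ t in nhds t₀, (curvePoly n a t).eval (y t) = 0) →
      (∃ j, y t₀ = x j t₀) →
      ∃ i, x i t₀ = y t₀ ∧ deriv y t₀ = deriv (x i) t₀) :
    ∀ y : Fin n → ℝ → ℝ, IsRootParamOn n a Set.univ y →
      (∃ W : Set ℝ, IsOpen W ∧ t₀ ∈ W ∧ ∀ i, ∀ t ∈ W, DifferentiableAt ℝ (y i) t) →
      ∀ i, ContinuousAt (deriv (y i)) t₀ := by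
  rintro y hy ⟨W, hWo, hWt, hWd⟩ i
  obtain ⟨V, hVo, hVt, hVd⟩ := hxdiff
  set U : Set ℝ := V ∩ W with hUdef
  have hUo : IsOpen U := hVo.inter hWo
  have hUt : t₀ ∈ U := ⟨hVt, hWt⟩
  -- each value of y i is a value of some x j
  have hval : ∀ t : ℝ, ∃ j, y i t = x j t := by
    intro t
    have h1 : y i t ∈ (curvePoly n a t).roots := by
      rw [hy t (Set.mem_univ t)]
      exact Multiset.mem_map_of_mem _ (Finset.mem_univ i)
    rw [hx t (Set.mem_univ t)] at h1
    obtain ⟨j, _, hj⟩ := Multiset.mem_map.1 h1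
    exact ⟨j, hj.symm⟩
  -- at each point of U, some j matches both value and derivative
  have hB : ∀ t ∈ U, ∃ j, y i t = x j t ∧ deriv (y i) t = deriv (x j) t := by
    intro t ht
    set s : ℕ → ℝ := fun m => t + 1 / (m + 1) with hsdef
    have hs0 : ∀ m, s m ≠ t := fun m => (lt_add_of_pos_right t (by positivity)).ne'
    have hst : Tendsto s atTop (𝓝 t) := by
      have h1 : Tendsto (fun m : ℕ => (1:ℝ) / (m + 1)) atTop (𝓝 0) :=
        tendsto_one_div_add_atTop_nhds_zero_nat
      have h2 : Tendsto (fun m : ℕ => t + 1 / (m + 1)) atTop (𝓝 (t + 0)) :=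
        tendsto_const_nhds.add h1
      rw [hsdef]
      simpa using h2
    have hstw : Tendsto s atTop (𝓝[≠] t) :=
      tendsto_nhdsWithin_of_tendsto_nhds_of_eventually_within s hst
        (Eventually.of_forall fun m => hs0 m)
    obtain ⟨j, hj⟩ := aux_pigeon (p := fun j m => y i (s m) = x j (s m))
      (Eventually.of_forall fun m => hval (s m))
    obtain ⟨φ, hφ, hφ2⟩ := extraction_of_frequently_atTop hj
    have hgd : DifferentiableAt ℝ (fun u => y i u - x j u) t :=
      (hWd i t ht.2).sub (hVd j t ht.1)
    have hcomp : Tendsto (fun m => s (φ m)) atTop (𝓝[≠] t) := hstw.comp hφ.tendsto_atTop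
    obtain ⟨hg0, hg1⟩ := aux_seq_vanish_deriv hgd hcomp
      (fun m => by simpa [sub_eq_zero] using hφ2 m)
    refine ⟨j, sub_eq_zero.1 hg0, ?_⟩
    rw [deriv_fun_sub (hWd i t ht.2) (hVd j t ht.1)] at hg1
    exact sub_eq_zero.1 hg1
  -- main continuity via subsequences
  rw [ContinuousAt]
  apply Filter.tendsto_of_subseq_tendsto
  intro ns hns
  have hmem : ∀ᶠ m in atTop, ns m ∈ U := hns.eventually (hUo.mem_nhds hUt)
  obtain ⟨j, hj⟩ := aux_pigeon
    (p := fun j m => y i (ns m) = x j (ns m) ∧ deriv (y i) (ns m) = deriv (x j) (ns m))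
    (hmem.mono fun m hm => hB _ hm)
  obtain ⟨φ, hφ, hφ2⟩ := extraction_of_frequently_atTop hj
  set w : ℕ → ℝ := fun m => ns (φ m) with hwdef
  have hwt : Tendsto w atTop (𝓝 t₀) := hns.comp hφ.tendsto_atTop
  by_cases hc : ∀ᶠ m in atTop, w m = t₀
  · refine ⟨φ, ?_⟩
    have : ∀ᶠ m in atTop, deriv (y i) (w m) = deriv (y i) t₀ :=
      hc.mono fun m hm => by rw [hm]
    exact Tendsto.congr' (this.mono fun m hm => hm.symm) tendsto_const_nhds
  · have hfreq : ∃ᶠ m in atTop, w m ≠ t₀ := by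
      rwa [Filter.not_eventually] at hc
    obtain ⟨ψ, hψ, hψ2⟩ := extraction_of_frequently_atTop hfreq
    have hcomp : Tendsto (fun m => w (ψ m)) atTop (𝓝[≠] t₀) :=
      tendsto_nhdsWithin_of_tendsto_nhds_of_eventually_within _
        (hwt.comp hψ.tendsto_atTop) (Eventually.of_forall fun m => hψ2 m)
    have hgd : DifferentiableAt ℝ (fun u => y i u - x j u) t₀ :=
      (hWd i t₀ hUt.2).sub (hVd j t₀ hUt.1)
    obtain ⟨hg0, hg1⟩ := aux_seq_vanish_deriv hgd hcomp
      (fun m => by simpa [sub_eq_zero] using (hφ2 (ψ m)).1)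
    rw [deriv_fun_sub (hWd i t₀ hUt.2) (hVd j t₀ hUt.1)] at hg1
    have hkey : deriv (x j) t₀ = deriv (y i) t₀ := (sub_eq_zero.1 hg1).symm
    refine ⟨φ ∘ ψ, ?_⟩
    simp only [Function.comp]
    have h5 : Tendsto (fun m => deriv (x j) (w (ψ m))) atTop (𝓝 (deriv (x j) t₀)) :=
      (hxC1 j).tendsto.comp (hwt.comp hψ.tendsto_atTop)
    rw [hkey] at h5
    exact h5.congr fun m => ((hφ2 (ψ m)).2).symm
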